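/- Let n ≥ 5 be an integer and let v : ℝ → ℝ be a four-times continuously differentiable positive function solving the Delaunay ODE. Then the Hamiltonian energy H(v)(t) = −v′(t)·v‴(t) + (1/2)·v″(t)² + ((n(n−4)+8)/4)·v′(t)² − (n²(n−4)²/32)·v(t)² + ((n−4)²(n²−4)/32)·v(t)^(2n/(n−4)) is constant in t, i.e. H(v)(t) = H(v)(0) for all t ∈ ℝ. -/

import Mathlib

open Real

/-- The Delaunay ODE for an integer `n ≥ 5`:
`v⁗ − ((n(n−4)+8)/2)·v″ + (n²(n−4)²/16)·v − (n(n−4)(n²−4)/16)·v^((n+4)/(n−4)) = 0`,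
where the power is a real power. -/
def DelaunayODE (n : ℕ) (v : ℝ → ℝ) : Prop :=
  ∀ t : ℝ,
    iteratedDeriv 4 v t - (((n : ℝ) * ((n : ℝ) - 4) + 8) / 2) * iteratedDeriv 2 v t
      + ((n : ℝ) ^ 2 * ((n : ℝ) - 4) ^ 2 / 16) * v t
      - ((n : ℝ) * ((n : ℝ) - 4) * ((n : ℝ) ^ 2 - 4) / 16)
          * (v t) ^ (((n : ℝ) + 4) / ((n : ℝ) - 4)) = 0

/-- The Hamiltonian energy of a function `v : ℝ → ℝ` for the Delaunay ODE. -/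
noncomputable def hamiltonian (n : ℕ) (v : ℝ → ℝ) (t : ℝ) : ℝ :=
  -(deriv v t) * iteratedDeriv 3 v t + (1 / 2) * (iteratedDeriv 2 v t) ^ 2
    + (((n : ℝ) * ((n : ℝ) - 4) + 8) / 4) * (deriv v t) ^ 2
    - ((n : ℝ) ^ 2 * ((n : ℝ) - 4) ^ 2 / 32) * (v t) ^ 2
    + (((n : ℝ) - 4) ^ 2 * ((n : ℝ) ^ 2 - 4) / 32)
        * (v t) ^ ((2 * (n : ℝ)) / ((n : ℝ) - 4))

theorem hamiltonian_const (n : ℕ) (hn : 5 ≤ n) (v : ℝ → ℝ)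
    (hv : ContDiff ℝ 4 v) (hpos : ∀ t : ℝ, 0 < v t)
    (hode : DelaunayODE n v) (t : ℝ) :
    hamiltonian n v t = hamiltonian n v 0 := by
  have hn5 : (5:ℝ) ≤ (n:ℝ) := by exact_mod_cast hn
  have hn4 : (n:ℝ) - 4 ≠ 0 := by linarith
  have hv4 : ContDiff ℝ (3 + 1 : WithTop ℕ∞) v := by norm_num at hv ⊢; exact hv
  have p1 := contDiff_succ_iff_deriv.mp hv4
  have hd0 : Differentiable ℝ v := p1.1
  have hv3 : ContDiff ℝ (2 + 1 : WithTop ℕ∞) (deriv v) := by norm_num; exact p1.2.2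
  have p2 := contDiff_succ_iff_deriv.mp hv3
  have hd1 : Differentiable ℝ (deriv v) := p2.1
  have hv2 : ContDiff ℝ (1 + 1 : WithTop ℕ∞) (deriv (deriv v)) := by norm_num; exact p2.2.2
  have p3 := contDiff_succ_iff_deriv.mp hv2
  have hd2 : Differentiable ℝ (deriv (deriv v)) := p3.1
  have hv1 : ContDiff ℝ (0 + 1 : WithTop ℕ∞) (deriv (deriv (deriv v))) := by norm_num; exact p3.2.2
  have hd3 : Differentiable ℝ (deriv (deriv (deriv v))) :=
    (contDiff_succ_iff_deriv.mp hv1).1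
  have hi2 : iteratedDeriv 2 v = deriv (deriv v) := by
    simp [iteratedDeriv_succ, iteratedDeriv_one]
  have hi3 : iteratedDeriv 3 v = deriv (deriv (deriv v)) := by
    simp [iteratedDeriv_succ, iteratedDeriv_one]
  have hi4 : iteratedDeriv 4 v = deriv (deriv (deriv (deriv v))) := by
    simp [iteratedDeriv_succ, iteratedDeriv_one]
  have e : hamiltonian n v = fun y =>
      -(deriv v y * deriv (deriv (deriv v)) y) + (1 / 2) * (deriv (deriv v) y) ^ 2
      + (((n : ℝ) * ((n : ℝ) - 4) + 8) / 4) * (deriv v y) ^ 2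
      - ((n : ℝ) ^ 2 * ((n : ℝ) - 4) ^ 2 / 32) * (v y) ^ 2
      + (((n : ℝ) - 4) ^ 2 * ((n : ℝ) ^ 2 - 4) / 32)
          * (v y) ^ ((2 * (n : ℝ)) / ((n : ℝ) - 4)) := by
    funext y; simp only [hamiltonian, hi2, hi3]; ring
  have hpe : (2 * (n : ℝ)) / ((n : ℝ) - 4) - 1 = ((n : ℝ) + 4) / ((n : ℝ) - 4) := by
    field_simp
    ring
  have key : ∀ x : ℝ, HasDerivAt (hamiltonian n v) 0 x := by
    intro x
    have H0 : HasDerivAt v (deriv v x) x := (hd0 x).hasDerivAt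
    have H1 : HasDerivAt (deriv v) (deriv (deriv v) x) x := (hd1 x).hasDerivAt
    have H2 : HasDerivAt (deriv (deriv v)) (deriv (deriv (deriv v)) x) x := (hd2 x).hasDerivAt
    have H3 : HasDerivAt (deriv (deriv (deriv v))) (deriv (deriv (deriv (deriv v))) x) x :=
      (hd3 x).hasDerivAt
    have Hp : HasDerivAt (fun y => (v y) ^ ((2 * (n : ℝ)) / ((n : ℝ) - 4)))
        (((2 * (n : ℝ)) / ((n : ℝ) - 4)) * (v x) ^ (((n : ℝ) + 4) / ((n : ℝ) - 4))
          * deriv v x) x := by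
      have h := H0.rpow_const (p := (2 * (n : ℝ)) / ((n : ℝ) - 4)) (Or.inl (hpos x).ne')
      rw [hpe] at h
      convert h using 1
      ring
    have T1 := (H1.mul H3).neg
    have T2 := HasDerivAt.const_mul ((1:ℝ)/2) (H2.pow 2)
    have T3 := HasDerivAt.const_mul (((n : ℝ) * ((n : ℝ) - 4) + 8) / 4) (H1.pow 2)
    have T4 := HasDerivAt.const_mul ((n : ℝ) ^ 2 * ((n : ℝ) - 4) ^ 2 / 32) (H0.pow 2)
    have T5 := HasDerivAt.const_mul (((n : ℝ) - 4) ^ 2 * ((n : ℝ) ^ 2 - 4) / 32) Hp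
    have Htot := ((((T1.add T2).add T3).sub T4).add T5)
    have Htot : HasDerivAt (hamiltonian n v) _ x :=
      Htot.congr_of_eventuallyEq (Filter.Eventually.of_forall (fun y => congrFun e y))
    convert Htot using 1
    have hx := hode x
    rw [hi2, hi4] at hx
    have hc : ((n:ℝ)-4)^2*((n:ℝ)^2-4)/32 * ((2*(n:ℝ))/((n:ℝ)-4))
        = (n:ℝ)*((n:ℝ)-4)*((n:ℝ)^2-4)/16 := by
      field_simp
      ring
    set w := (v x) ^ (((n:ℝ)+4)/((n:ℝ)-4)) with hw
    linear_combination (deriv v x) * hx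
      - (deriv v x * w) * hc
  exact is_const_of_deriv_eq_zero (fun x => (key x).differentiableAt)
    (fun x => (key x).deriv) t 0
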